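/- For all i, j ∈ {1, 2, 3}, the tangential part of ∇̃_{eᵢ} eⱼ along the hypersurface {t = t₀} vanishes: ∇̃_{eᵢ} eⱼ − g̃(∇̃_{eᵢ} eⱼ, e₄) e₄ = 0 at every point. Consequently the induced Levi-Civita connection ∇ of the hypersurface satisfies ∇_{eᵢ} eⱼ = 0, and since the components h(eᵢ,eⱼ) = g̃(∇̃_{eᵢ}eⱼ, e₄) are constant, the cubic form vanishes: (∇_{eᵢ} h)(eⱼ, eₖ) = eᵢ(h(eⱼ,eₖ)) − h(∇_{eᵢ}eⱼ, eₖ) − h(eⱼ, ∇_{eᵢ}eₖ) = 0 for all i, j, k ∈ {1,2,3}, i.e., the hypersurface is parallel. -/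

import Mathlib

noncomputable section

/-- The left-invariant frame fields e₁,e₂,e₃,e₄ on ℝ⁴ (coordinates x,y,z,t = p 0,...,p 3). -/
def eVF (i : Fin 4) (p : Fin 4 → ℝ) : Fin 4 → ℝ :=
  ![![1, 0, 0, 0],
    ![p 3, 1, 0, 0],
    ![(p 3) ^ 2 / 2, p 3, 1, 0],
    ![0, 0, 0, 1]] i

/-- The matrix of the metric g̃ at a point with last coordinate t. -/
def gMat (t : ℝ) : Matrix (Fin 4) (Fin 4) ℝ :=
  !![1, -t, t ^ 2 / 2, 0;
     -t, 1 + t ^ 2, -t * (1 + t ^ 2 / 2), 0;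
     t ^ 2 / 2, -t * (1 + t ^ 2 / 2), 1 + t ^ 2 + t ^ 4 / 4, 0;
     0, 0, 0, 1]

/-- The metric g̃ as a bilinear form on each tangent space. -/
def gMet (p X Y : Fin 4 → ℝ) : ℝ :=
  ∑ i, ∑ j, gMat (p 3) i j * X i * Y j

/-- Partial derivative in direction of the i-th coordinate. -/
def pd (i : Fin 4) (f : (Fin 4 → ℝ) → ℝ) (p : Fin 4 → ℝ) : ℝ :=
  deriv (fun s => f (Function.update p i s)) (p i)

/-- The Christoffel symbols Γᵏᵢⱼ of g̃. -/
def Chr (p : Fin 4 → ℝ) (k i j : Fin 4) : ℝ :=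
  (1 / 2) * ∑ l, (gMat (p 3))⁻¹ k l *
    (pd i (fun q => gMat (q 3) j l) p + pd j (fun q => gMat (q 3) i l) p
      - pd l (fun q => gMat (q 3) i j) p)

/-- The Levi-Civita connection of g̃ in coordinates. -/
def nabla (X Y : (Fin 4 → ℝ) → (Fin 4 → ℝ)) (p : Fin 4 → ℝ) : Fin 4 → ℝ :=
  fun k => (∑ i, X p i * pd i (fun q => Y q k) p)
    + ∑ i, ∑ j, Chr p k i j * X p i * Y p j

/-- Lie bracket of vector fields on ℝ⁴. -/
def bracket (X Y : (Fin 4 → ℝ) → (Fin 4 → ℝ)) (p : Fin 4 → ℝ) : Fin 4 → ℝ :=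
  fderiv ℝ Y p (X p) - fderiv ℝ X p (Y p)

/-- The curvature tensor R̃(X,Y)Z = ∇̃_X ∇̃_Y Z − ∇̃_Y ∇̃_X Z − ∇̃_{[X,Y]} Z. -/
def Riem (X Y Z : (Fin 4 → ℝ) → (Fin 4 → ℝ)) (p : Fin 4 → ℝ) : Fin 4 → ℝ :=
  nabla X (nabla Y Z) p - nabla Y (nabla X Z) p - nabla (bracket X Y) Z p

/-- Components of the second fundamental form of the hypersurface {t = t₀}. -/
def sff (p : Fin 4 → ℝ) (i j : Fin 3) : ℝ :=
  gMet p (nabla (eVF i.castSucc) (eVF j.castSucc) p) (eVF 3 p)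

/-- The tangential part of ∇̃_{eᵢ}eⱼ along {t = t₀}, i.e., the induced connection
∇_{eᵢ}eⱼ of the hypersurface. -/
def tanNabla (i j : Fin 3) (p : Fin 4 → ℝ) : Fin 4 → ℝ :=
  nabla (eVF i.castSucc) (eVF j.castSucc) p
    - gMet p (nabla (eVF i.castSucc) (eVF j.castSucc) p) (eVF 3 p) • eVF 3 p

/-- The pointwise bilinear extension of h to tangent vectors, using the
orthonormal tangent frame {e₁,e₂,e₃}. -/
def sffBil (p : Fin 4 → ℝ) (V W : Fin 4 → ℝ) : ℝ :=
  ∑ j : Fin 3, ∑ k : Fin 3,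
    gMet p V (eVF j.castSucc p) * gMet p W (eVF k.castSucc p) * sff p j k

def gInv (t : ℝ) : Matrix (Fin 4) (Fin 4) ℝ :=
  !![1 + t^2 + t^4/4, t + t^3/2, t^2/2, 0;
     t + t^3/2, 1 + t^2, t, 0;
     t^2/2, t, 1, 0;
     0, 0, 0, 1]

lemma gMat_inv (t : ℝ) : (gMat t)⁻¹ = gInv t := by
  apply Matrix.inv_eq_right_inv
  ext i j
  fin_cases i <;> fin_cases j <;>
    simp [gMat, gInv, Matrix.mul_apply, Fin.sum_univ_four] <;> ring

lemma pd3 (f : ℝ → ℝ) (p : Fin 4 → ℝ) : pd 3 (fun q => f (q 3)) p = deriv f (p 3) := by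
  simp [pd]

def dg (t : ℝ) : Matrix (Fin 4) (Fin 4) ℝ :=
  !![0, -1, t, 0;
     -1, 2*t, -1 - 3*t^2/2, 0;
     t, -1 - 3*t^2/2, 2*t + t^3, 0;
     0, 0, 0, 0]

lemma pd_gMat (i a b : Fin 4) (p : Fin 4 → ℝ) :
    pd i (fun q => gMat (q 3) a b) p = if i = 3 then dg (p 3) a b else 0 := by
  by_cases hi : i = 3
  · subst hi
    simp only [if_pos rfl]
    rw [pd3 (fun s => gMat s a b)]
    fin_cases a <;> fin_cases b <;>
      simp (disch := fun_prop) [gMat, dg, Matrix.vecHead, Matrix.vecTail, deriv_fun_add] <;> norm_num [deriv_pow_field] <;> ring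
  · rw [if_neg hi]
    have h : (fun q : Fin 4 → ℝ => gMat (q 3) a b) ∘ (fun s => Function.update p i s)
        = fun _ => gMat (p 3) a b := by
      funext s
      simp [Function.update_of_ne (fun h : (3:Fin 4) = i => hi h.symm)]
    simp only [pd]
    rw [show (fun s => gMat ((Function.update p i s) 3) a b) = fun _ => gMat (p 3) a b from h]
    simp

lemma pd_const (i : Fin 4) (c : ℝ) (p : Fin 4 → ℝ) : pd i (fun _ => c) p = 0 := by
  simp [pd]

lemma pd_coord (i : Fin 4) (p : Fin 4 → ℝ) (h : i ≠ 3) : pd i (fun q => q 3) p = 0 := by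
  simp only [pd]
  have : (fun s => Function.update p i s 3) = fun _ => p 3 := by
    funext s; exact Function.update_of_ne (fun hh : (3:Fin 4) = i => h hh.symm) _ _
  rw [this]; simp

lemma pd_sq (i : Fin 4) (p : Fin 4 → ℝ) (h : i ≠ 3) : pd i (fun q => q 3 ^ 2 / 2) p = 0 := by
  simp only [pd]
  have : (fun s => Function.update p i s 3 ^ 2 / 2) = fun _ => p 3 ^ 2 / 2 := by
    funext s; rw [Function.update_of_ne (fun hh : (3:Fin 4) = i => h hh.symm)]
  rw [this]; simp

lemma pd_sq' (i : Fin 4) (p : Fin 4 → ℝ) (h : i ≠ 3) :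
    pd i (fun q => q 3 ^ 2 * (1/2)) p = 0 := by
  simp only [pd]
  have : (fun s => Function.update p i s 3 ^ 2 * (1/2)) = fun _ => p 3 ^ 2 * (1/2) := by
    funext s; rw [Function.update_of_ne (fun hh : (3:Fin 4) = i => h hh.symm)]
  rw [this]; simp

def hval : Fin 3 → Fin 3 → ℝ := ![![0,1/2,0],![1/2,0,1/2],![0,1/2,0]]

lemma Chr_spatial (p : Fin 4 → ℝ) (k a b : Fin 4) (ha : a ≠ 3) (hb : b ≠ 3) :
    Chr p k a b = if k = 3 then -(1/2) * dg (p 3) a b else 0 := by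
  unfold Chr
  simp only [Fin.sum_univ_four, pd_gMat, gMat_inv]
  fin_cases k <;> fin_cases a <;> fin_cases b <;>
    first
      | exact absurd rfl ha
      | exact absurd rfl hb
      | (simp [gInv, dg, Matrix.vecHead, Matrix.vecTail]; try ring)

set_option maxHeartbeats 1000000 in
lemma nabla_eVF (i j : Fin 3) (p : Fin 4 → ℝ) :
    nabla (eVF i.castSucc) (eVF j.castSucc) p = fun k => if k = 3 then hval i j else 0 := by
  funext k
  unfold nabla
  simp only [Fin.sum_univ_four]
  fin_cases i <;> fin_cases j <;> fin_cases k <;>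
    (simp only [eVF, Fin.castSucc, Fin.castAdd, Fin.castLE, Fin.isValue,
        Matrix.cons_val_zero, Matrix.cons_val_one, Matrix.head_cons,
        Matrix.cons_val_two, Matrix.tail_cons, Matrix.cons_val_three,
        Matrix.cons_val_fin_one, Matrix.vecHead, Matrix.vecTail, Function.comp]
     simp [Chr_spatial, pd_const, pd_coord, pd_sq, pd_sq', dg, hval,
        Matrix.vecHead, Matrix.vecTail] <;> ring)

lemma sff_eq (p : Fin 4 → ℝ) (i j : Fin 3) : sff p i j = hval i j := by
  unfold sff gMet
  rw [nabla_eVF]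
  simp [Fin.sum_univ_four, gMat, eVF, Matrix.vecHead, Matrix.vecTail]

lemma tanNabla_eq (i j : Fin 3) (p : Fin 4 → ℝ) : tanNabla i j p = 0 := by
  unfold tanNabla
  have h : gMet p (nabla (eVF i.castSucc) (eVF j.castSucc) p) (eVF 3 p) = hval i j :=
    sff_eq p i j
  rw [h, nabla_eVF]
  funext k
  fin_cases k <;> simp [eVF, Matrix.vecHead, Matrix.vecTail]

lemma gMet_zero_left (p Y : Fin 4 → ℝ) : gMet p 0 Y = 0 := by
  simp [gMet]

lemma sffBil_zero_left (p W : Fin 4 → ℝ) : sffBil p 0 W = 0 := by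
  simp [sffBil, gMet_zero_left]

/-- The induced connection of the hypersurface {t = t₀} satisfies ∇_{eᵢ}eⱼ = 0,
and the cubic form (∇h)(eᵢ;eⱼ,eₖ) = eᵢ(h(eⱼ,eₖ)) − h(∇_{eᵢ}eⱼ,eₖ) − h(eⱼ,∇_{eᵢ}eₖ)
vanishes: the hypersurface is parallel. -/
theorem nil4_hypersurface_parallel :
    (∀ (p : Fin 4 → ℝ) (i j : Fin 3), tanNabla i j p = 0) ∧
    (∀ (p : Fin 4 → ℝ) (i j k : Fin 3),
      fderiv ℝ (fun q => sff q j k) p (eVF i.castSucc p)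
        - sffBil p (tanNabla i j p) (eVF k.castSucc p)
        - sffBil p (eVF j.castSucc p) (tanNabla i k p) = 0) := by
  constructor
  · exact fun p i j => tanNabla_eq i j p
  · intro p i j k
    have h1 : (fun q => sff q j k) = fun _ => hval j k := funext fun q => sff_eq q j k
    rw [h1, fderiv_fun_const]
    rw [tanNabla_eq, tanNabla_eq, sffBil_zero_left]
    have h2 : sffBil p (eVF j.castSucc p) 0 = 0 := by simp [sffBil, gMet]
    rw [h2]
    simp
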